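/- Let k be an algebraically closed field. If φ, ψ : G_a → GL(n, k) are homomorphisms of algebraic groups with π ∘ φ = π ∘ ψ, where π : GL(n, k) → PGL(n, k) is the quotient map, then φ = ψ. -/
import Mathlib


open Polynomial

/-- `PGL(n, k)`: the quotient of `GL(n, k)` by its subgroup of scalar matrices
(= its center). -/
abbrev PGL (n : ℕ) (k : Type*) [Field k] :=
  GL (Fin n) k ⧸ Subgroup.center (GL (Fin n) k)

/-- The natural quotient homomorphism `π : GL(n, k) → PGL(n, k)`. -/
noncomputable abbrev PGL.mk (n : ℕ) (k : Type*) [Field k] :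
    GL (Fin n) k →* PGL n k :=
  QuotientGroup.mk' (Subgroup.center (GL (Fin n) k))

lemma center_is_scalar {k : Type*} [Field k] {n : ℕ} {C : GL (Fin n) k}
    (hC : C ∈ Subgroup.center (GL (Fin n) k)) :
    ∃ r : k, (C : Matrix (Fin n) (Fin n) k) = Matrix.scalar (Fin n) r := by
  have h := Subgroup.mem_center_iff.mp hC
  have hmem : (C : Matrix (Fin n) (Fin n) k) ∈ Set.range (Matrix.scalar (Fin n)) := by
    apply Matrix.mem_range_scalar_of_commute_transvectionStruct
    intro t
    have hu : IsUnit t.toMatrix := by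
      apply (Matrix.isUnit_iff_isUnit_det _).mpr
      rw [t.det]; exact isUnit_one
    obtain ⟨u, hu⟩ := hu
    have hcomm : u * C = C * u := h u
    have := congrArg Units.val hcomm
    simpa [Commute, SemiconjBy, hu] using this
  obtain ⟨r, hr⟩ := hmem
  exact ⟨r, hr.symm⟩

/-- If `φ, ψ : 𝔾ₐ → GL(n, k)` are homomorphisms of algebraic groups with
`π ∘ φ = π ∘ ψ`, then `φ = ψ`. -/
theorem stmt_11 {k : Type*} [Field k] [IsAlgClosed k] {n : ℕ}
    (φ ψ : k → GL (Fin n) k)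
    (hφalg : ∃ A : Matrix (Fin n) (Fin n) (Polynomial k), ∀ t : k,
      ((φ t : Matrix (Fin n) (Fin n) k)) = A.map (fun q => q.eval t))
    (hψalg : ∃ B : Matrix (Fin n) (Fin n) (Polynomial k), ∀ t : k,
      ((ψ t : Matrix (Fin n) (Fin n) k)) = B.map (fun q => q.eval t))
    (hφ : ∀ s t, φ (s + t) = φ s * φ t)
    (hψ : ∀ s t, ψ (s + t) = ψ s * ψ t)
    (h : ∀ t, PGL.mk n k (φ t) = PGL.mk n k (ψ t)) :
    φ = ψ := by
  rcases Nat.eq_zero_or_pos n with hn | hn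
  · subst hn
    funext t
    apply Units.ext
    exact Subsingleton.elim _ _
  set i0 : Fin n := ⟨0, hn⟩
  obtain ⟨A, hA⟩ := hφalg
  obtain ⟨B, hB⟩ := hψalg
  -- φ 0 = 1, ψ 0 = 1
  have hφ0 : φ 0 = 1 := by
    have := hφ 0 0; rw [add_zero] at this; exact left_eq_mul.mp this
  have hψ0 : ψ 0 = 1 := by
    have := hψ 0 0; rw [add_zero] at this; exact left_eq_mul.mp this
  have hφinv : ∀ t, (φ t)⁻¹ = φ (-t) := by
    intro t
    have : φ t * φ (-t) = 1 := by rw [← hφ t (-t), add_neg_cancel, hφ0]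
    exact inv_eq_of_mul_eq_one_right this
  -- the central "discrepancy"
  have hc : ∀ t, ψ t * (φ t)⁻¹ ∈ Subgroup.center (GL (Fin n) k) := by
    intro t
    obtain ⟨z, hz, hz2⟩ := (QuotientGroup.mk'_eq_mk' (N := Subgroup.center (GL (Fin n) k))).mp (h t)
    have : ψ t * (φ t)⁻¹ = z := by
      rw [← hz2]
      have hcz := (Subgroup.mem_center_iff.mp hz (φ t)).symm
      rw [← hcz, mul_assoc, mul_inv_cancel, mul_one]
    rw [this]; exact hz
  -- scalar value
  set lam : k → k := fun t => ((ψ t * (φ t)⁻¹ : GL (Fin n) k) : Matrix (Fin n) (Fin n) k) i0 i0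
    with hlam
  have hscal : ∀ t, ((ψ t * (φ t)⁻¹ : GL (Fin n) k) : Matrix (Fin n) (Fin n) k)
      = Matrix.scalar (Fin n) (lam t) := by
    intro t
    obtain ⟨r, hr⟩ := center_is_scalar (hc t)
    have : lam t = r := by
      rw [hlam]; simp only [hr, Matrix.scalar_apply, Matrix.diagonal_apply_eq]
    rw [this, hr]
  -- polynomial interpolating lam
  set M : Matrix (Fin n) (Fin n) (Polynomial k) :=
    B * A.map (fun p => p.comp (-(X : Polynomial k))) with hM
  have hMt : ∀ t, ((ψ t * (φ t)⁻¹ : GL (Fin n) k) : Matrix (Fin n) (Fin n) k)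
      = M.map (fun q => q.eval t) := by
    intro t
    have h1 : ((ψ t * (φ t)⁻¹ : GL (Fin n) k) : Matrix (Fin n) (Fin n) k)
        = (ψ t : Matrix (Fin n) (Fin n) k) * (φ (-t) : Matrix (Fin n) (Fin n) k) := by
      rw [hφinv]; rfl
    rw [h1, hB, hA]
    have h2 : (A.map (fun p => p.comp (-(X : Polynomial k)))).map (fun q => q.eval t)
        = A.map (fun q => q.eval (-t)) := by
      ext i j
      simp [Matrix.map_apply, eval_comp]
    rw [hM]
    have h3 : (B * A.map (fun p => p.comp (-(X : Polynomial k)))).map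
        (fun q => q.eval t)
        = B.map (fun q => q.eval t) *
          (A.map (fun p => p.comp (-(X : Polynomial k)))).map (fun q => q.eval t) := by
      exact Matrix.map_mul (f := evalRingHom t)
    rw [h3, h2]
  set q : Polynomial k := M i0 i0 with hq
  have heval : ∀ t, q.eval t = lam t := by
    intro t
    have := congrArg (fun m => m i0 i0) (hMt t)
    simp only [Matrix.map_apply] at this
    exact this.symm
  -- lam t ≠ 0
  have hne : ∀ t, lam t ≠ 0 := by
    intro t h0
    have hunit : IsUnit ((ψ t * (φ t)⁻¹ : GL (Fin n) k) : Matrix (Fin n) (Fin n) k) :=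
      (ψ t * (φ t)⁻¹ : GL (Fin n) k).isUnit
    rw [hscal t, h0] at hunit
    have : (Matrix.scalar (Fin n) (0 : k)) = 0 := by
      simp [Matrix.scalar_apply]
    rw [this] at hunit
    haveI : Nonempty (Fin n) := ⟨i0⟩
    exact hunit.ne_zero rfl
  -- q is a nonzero constant
  have hdeg : q.degree = 0 := by
    by_contra hd
    rcases eq_or_ne q 0 with h0 | h0
    · exact hne 0 (by rw [← heval 0, h0, eval_zero])
    obtain ⟨t, ht⟩ := IsAlgClosed.exists_root q (by
      intro hdd
      exact hd hdd)
    exact hne t (by rw [← heval t]; exact (IsRoot.def.mp ht))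
  obtain ⟨a, ha⟩ : ∃ a, q = C a := ⟨q.coeff 0, eq_C_of_degree_le_zero (le_of_eq hdeg)⟩
  -- lam 0 = 1
  have hlam0 : lam 0 = 1 := by
    have h1 : (ψ 0 * (φ 0)⁻¹ : GL (Fin n) k) = 1 := by rw [hφ0, hψ0]; simp
    rw [hlam]
    simp only [h1]
    simp [Matrix.one_apply]
  have hconst : ∀ t, lam t = 1 := by
    intro t
    have h1 : lam t = a := by rw [← heval t, ha, eval_C]
    have h2 : lam 0 = a := by rw [← heval 0, ha, eval_C]
    rw [h1, ← h2, hlam0]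
  -- conclude
  funext t
  have h1 : ψ t * (φ t)⁻¹ = 1 := by
    apply Units.ext
    have := hscal t
    rw [hconst t] at this
    rw [this]
    simp [Matrix.scalar_apply]
  exact (mul_inv_eq_one.mp h1).symm
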